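/- (Theorem 2, necessity.) Let {A_k}_{k=1,…,M} be linear operators on ℂ^D satisfying Σ_k A_k†A_k = 1. Suppose that for every density matrix ρ₁ on ℂ^D, the eigenvalue vector of ρ₂ = Σ_k A_k ρ₁ A_k† is majorized by that of ρ₁, i.e., λ(ρ₂) ≺ λ(ρ₁). Then Σ_k A_k A_k† = 1. -/

import Mathlib

open Matrix BigOperators
open scoped ComplexOrder

/-- The sum of the `k` largest entries of `x`, expressed as the supremum of the
sums of `x` over all subsets of cardinality `k`. -/
noncomputable def kMaxSum {D : ℕ} (x : Fin D → ℝ) (k : ℕ) : ℝ :=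
  sSup ((fun A : Finset (Fin D) => ∑ i ∈ A, x i) '' {A : Finset (Fin D) | A.card = k})

/-- `x` is majorized by `y` (`x ≺ y`): every partial sum of the `k` largest
entries of `x` is at most the corresponding sum for `y`, and the total sums
coincide. -/
def MajorizedBy {D : ℕ} (x y : Fin D → ℝ) : Prop :=
  (∀ k, k ≤ D → kMaxSum x k ≤ kMaxSum y k) ∧ (∑ i, x i = ∑ i, y i)

lemma kMaxSum_const {D : ℕ} (c : ℝ) {k : ℕ} (hk : k ≤ D) :
    kMaxSum (fun _ : Fin D => c) k = k * c := by
  obtain ⟨B, -, hB⟩ := Finset.exists_subset_card_eq (s := (Finset.univ : Finset (Fin D)))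
    (by simpa using hk)
  have himg : (fun A : Finset (Fin D) => ∑ i ∈ A, (fun _ : Fin D => c) i) ''
      {A : Finset (Fin D) | A.card = k} = {(k : ℝ) * c} := by
    ext r
    constructor
    · rintro ⟨C, hC, rfl⟩
      simp [Finset.sum_const, hC, nsmul_eq_mul]
      simp only [Set.mem_setOf_eq] at hC
      simp [Finset.sum_const, hC, nsmul_eq_mul]
    · rintro rfl
      exact ⟨B, hB, by simp [Finset.sum_const, hB, nsmul_eq_mul]⟩
  rw [kMaxSum, himg, csSup_singleton]

lemma single_le_kMaxSum {D : ℕ} (x : Fin D → ℝ) (i : Fin D) : x i ≤ kMaxSum x 1 := by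
  have hbdd : BddAbove ((fun A : Finset (Fin D) => ∑ i ∈ A, x i) ''
      {A : Finset (Fin D) | A.card = 1}) :=
    ((Set.toFinite _).image _).bddAbove
  exact le_csSup hbdd ⟨{i}, by simp, by simp⟩

/-- **Theorem 2, necessity.**  Let the Kraus operators `A k` satisfy
`Σ A_k† A_k = 1`.  If for every density matrix `ρ₁` the output
`ρ₂ = Σ A_k ρ₁ A_k†` satisfies `λ(ρ₂) ≺ λ(ρ₁)`, then `Σ A_k A_k† = 1`. -/
theorem theorem2_necessity {D M : ℕ}
    (A : Fin M → Matrix (Fin D) (Fin D) ℂ)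
    (hA1 : ∑ k, (A k)ᴴ * A k = 1)
    (hmaj : ∀ (ρ1 : Matrix (Fin D) (Fin D) ℂ) (hρ1 : ρ1.PosSemidef),
      ρ1.trace = 1 →
      ∀ (hρ2 : (∑ k, A k * ρ1 * (A k)ᴴ).IsHermitian),
        MajorizedBy hρ2.eigenvalues hρ1.1.eigenvalues) :
    ∑ k, A k * (A k)ᴴ = 1 := by
  rcases Nat.eq_zero_or_pos D with hD | hD
  · subst hD
    ext i j
    exact i.elim0
  have hDc : (D : ℂ) ≠ 0 := Nat.cast_ne_zero.2 hD.ne'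
  set c : ℂ := (D : ℂ)⁻¹ with hc
  have hcstar : star c = c := by
    simp [hc, Complex.star_def, ← Complex.ofReal_natCast]
  set ρ1 : Matrix (Fin D) (Fin D) ℂ := c • 1 with hρ1def
  have hρ1 : ρ1.PosSemidef := by
    rw [Matrix.posSemidef_iff_dotProduct_mulVec]
    constructor
    · unfold Matrix.IsHermitian
      rw [hρ1def, conjTranspose_smul, conjTranspose_one, hcstar]
    · intro x
      have : ρ1 *ᵥ x = c • x := by rw [hρ1def, smul_mulVec, one_mulVec]
      rw [this, dotProduct_smul]
      refine mul_nonneg ?_ (dotProduct_star_self_nonneg x)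
      rw [hc, ← Complex.ofReal_natCast, ← Complex.ofReal_inv]
      exact_mod_cast inv_nonneg.mpr (Nat.cast_nonneg D)
  have htrace : ρ1.trace = 1 := by
    rw [hρ1def, trace_smul, trace_one]
    simp [hc]
    field_simp
  set S : Matrix (Fin D) (Fin D) ℂ := ∑ k, A k * (A k)ᴴ with hS
  have hsum : ∑ k, A k * ρ1 * (A k)ᴴ = c • S := by
    rw [hS, Finset.smul_sum]
    refine Finset.sum_congr rfl fun k _ => ?_
    rw [hρ1def]
    rw [Matrix.mul_smul, Matrix.mul_one, Matrix.smul_mul]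
  have hSh : S.IsHermitian := by
    unfold Matrix.IsHermitian
    rw [hS, conjTranspose_sum]
    refine Finset.sum_congr rfl fun k _ => ?_
    rw [conjTranspose_mul, conjTranspose_conjTranspose]
  have hρ2 : (∑ k, A k * ρ1 * (A k)ᴴ).IsHermitian := by
    rw [hsum]
    unfold Matrix.IsHermitian
    rw [conjTranspose_smul, hSh, hcstar]
  obtain ⟨hmaj1, hmaj2⟩ := hmaj ρ1 hρ1 htrace hρ2
  -- eigenvalues of ρ1 are all 1/D
  have hev1 : hρ1.1.eigenvalues = fun _ : Fin D => (D : ℝ)⁻¹ := by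
    funext i
    rw [Matrix.IsHermitian.eigenvalues_eq]
    set v := (hρ1.1.eigenvectorBasis i).ofLp with hv
    have h1 : ρ1 *ᵥ v = c • v := by rw [hρ1def, smul_mulVec, one_mulVec]
    have h2 : star v ⬝ᵥ v = 1 := by
      have := (EuclideanSpace.inner_eq_star_dotProduct (𝕜 := ℂ)
        (hρ1.1.eigenvectorBasis i) (hρ1.1.eigenvectorBasis i)).symm
      rw [hv, dotProduct_comm, this, inner_self_eq_norm_sq_to_K, hρ1.1.eigenvectorBasis.orthonormal.1 i]
      simp
    rw [h1, dotProduct_smul, h2]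
    simp [hc, ← Complex.ofReal_natCast]
  -- each eigenvalue of ρ2 is ≤ 1/D
  have hle : ∀ i, hρ2.eigenvalues i ≤ (D : ℝ)⁻¹ := by
    intro i
    have h1 := single_le_kMaxSum hρ2.eigenvalues i
    have h2 := hmaj1 1 hD
    rw [hev1, kMaxSum_const _ hD] at h2
    simpa using h1.trans h2
  have hsum2 : ∑ i, hρ2.eigenvalues i = ∑ _i : Fin D, (D : ℝ)⁻¹ := by
    rw [hmaj2, hev1]
  have hev2 : ∀ i, hρ2.eigenvalues i = (D : ℝ)⁻¹ := by
    intro i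
    have := (Finset.sum_eq_sum_iff_of_le (s := Finset.univ)
      (f := hρ2.eigenvalues) (g := fun _ => (D : ℝ)⁻¹) (fun i _ => hle i)).mp hsum2
    exact this i (Finset.mem_univ i)
  -- ρ2 = c • 1
  have hdiag : Matrix.diagonal (RCLike.ofReal ∘ hρ2.eigenvalues) = c • (1 : Matrix (Fin D) (Fin D) ℂ) := by
    have hfun : RCLike.ofReal ∘ hρ2.eigenvalues = fun _ : Fin D => c := by
      funext i
      simp only [Function.comp_apply, hev2 i, hc]
      push_cast
      rfl
    rw [hfun, smul_one_eq_diagonal]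
  have hU : (hρ2.eigenvectorUnitary : Matrix (Fin D) (Fin D) ℂ) *
      star (hρ2.eigenvectorUnitary : Matrix (Fin D) (Fin D) ℂ) = 1 :=
    (Matrix.mem_unitaryGroup_iff.mp hρ2.eigenvectorUnitary.2)
  have hρ2eq : (∑ k, A k * ρ1 * (A k)ᴴ) = c • 1 := by
    conv_lhs => rw [hρ2.spectral_theorem]
    rw [hdiag, map_smul, map_one]
  rw [hsum] at hρ2eq
  have : S = 1 := by
    have hc0 : c ≠ 0 := inv_ne_zero hDc
    exact smul_right_injective _ hc0 hρ2eq
  exact this
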